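/- Let W ⊆ V be a hyperplane on which g restricts degenerately, let E be a nonzero vector spanning Rad W, and let S ⊆ W be a subspace with W = S ⊕ span{E} on which g restricts nondegenerately. Then there exists a unique vector N in the g-orthogonal complement S^⊥ of S in V such that g(N, N) = 0 and g(E, N) = 1; moreover N ∉ W and V = W ⊕ span{N}. -/

import Mathlib

theorem stmt_17 (V : Type*) [AddCommGroup V] [Module ℝ V] [FiniteDimensional ℝ V]
    (g : V →ₗ[ℝ] V →ₗ[ℝ] ℝ)
    (hgsymm : ∀ X Y : V, g X Y = g Y X)
    (hgnd : ∀ X : V, (∀ Y : V, g X Y = 0) → X = 0)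
    (W : Submodule ℝ V)
    (hcodim : Module.finrank ℝ W + 1 = Module.finrank ℝ V)
    (Worth : Submodule ℝ V)
    (hWorth : ∀ v : V, v ∈ Worth ↔ ∀ w ∈ W, g v w = 0)
    (hdeg : ∃ v ∈ W, v ≠ 0 ∧ ∀ w ∈ W, g v w = 0)
    (E : V) (hE0 : E ≠ 0)
    (hEspan : Submodule.span ℝ {E} = W ⊓ Worth)
    (S : Submodule ℝ V) (hSE : S ⊔ Submodule.span ℝ {E} = W)
    (hSEdisj : S ⊓ Submodule.span ℝ {E} = ⊥)
    (hSnd : ∀ s ∈ S, (∀ t ∈ S, g s t = 0) → s = 0)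
    (Sorth : Submodule ℝ V)
    (hSorth : ∀ v : V, v ∈ Sorth ↔ ∀ s ∈ S, g v s = 0) :
    (∃! N : V, N ∈ Sorth ∧ g N N = 0 ∧ g E N = 1) ∧
    (∀ N : V, (N ∈ Sorth ∧ g N N = 0 ∧ g E N = 1) →
      N ∉ W ∧ Disjoint W (Submodule.span ℝ {N}) ∧
      W ⊔ Submodule.span ℝ {N} = ⊤) := by
  -- Basic facts about E
  have hEmem : E ∈ W ⊓ Worth := by
    rw [← hEspan]; exact Submodule.mem_span_singleton_self E
  have hEW : E ∈ W := hEmem.1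
  have hEWo : ∀ w ∈ W, g E w = 0 := (hWorth E).1 hEmem.2
  have hEE : g E E = 0 := hEWo E hEW
  have hSleW : S ≤ W := hSE ▸ le_sup_left
  have hESorth : E ∈ Sorth := (hSorth E).2 fun s hs => hEWo s (hSleW hs)
  -- g is reflexive; Sorth is the bilinear-form orthogonal of S
  have hrefl : g.IsRefl := fun x y h => by rw [hgsymm]; exact h
  have hSorth_eq : Sorth = LinearMap.BilinForm.orthogonal g S := by
    ext v
    rw [hSorth, LinearMap.BilinForm.mem_orthogonal_iff]
    constructor
    · intro h s hs; rw [hgsymm]; exact h s hs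
    · intro h s hs; rw [hgsymm]; exact h s hs
  -- S and Sorth are complementary
  have hres : (LinearMap.BilinForm.restrict g S).Nondegenerate := by
    constructor
    · rintro ⟨s, hs⟩ h
      refine Subtype.ext (hSnd s hs fun t ht => ?_)
      exact h ⟨t, ht⟩
    · rintro ⟨s, hs⟩ h
      refine Subtype.ext (hSnd s hs fun t ht => ?_)
      exact (hgsymm s t).trans (h ⟨t, ht⟩)
  have hcompl : IsCompl S Sorth := by
    rw [hSorth_eq]
    exact LinearMap.BilinForm.isCompl_orthogonal_of_restrict_nondegenerate hrefl hres
  have hsupS : S ⊔ Sorth = ⊤ := hcompl.sup_eq_top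
  -- there is Z ∈ Sorth with g E Z ≠ 0
  have hZex : ∃ Z ∈ Sorth, g E Z ≠ 0 := by
    by_contra h
    push_neg at h
    apply hE0
    apply hgnd
    intro Y
    have hY : Y ∈ S ⊔ Sorth := hsupS ▸ Submodule.mem_top
    obtain ⟨s, hs, z, hz, rfl⟩ := Submodule.mem_sup.1 hY
    have h1 : g E s = 0 := hEWo s (hSleW hs)
    have h2 : g E z = 0 := h z hz
    simp [h1, h2]
  obtain ⟨Z, hZS, hZne⟩ := hZex
  -- construct N
  set Z₁ : V := (g E Z)⁻¹ • Z with hZ₁def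
  have hEZ₁ : g E Z₁ = 1 := by
    simp [hZ₁def, inv_mul_cancel₀ hZne]
  have hZ₁S : Z₁ ∈ Sorth := Sorth.smul_mem _ hZS
  set N₀ : V := Z₁ - (g Z₁ Z₁ / 2) • E with hN₀def
  have hN₀S : N₀ ∈ Sorth := Sorth.sub_mem hZ₁S (Sorth.smul_mem _ hESorth)
  have hZ₁E : g Z₁ E = 1 := (hgsymm Z₁ E) ▸ hEZ₁
  have hN₀N₀ : g N₀ N₀ = 0 := by
    simp only [hN₀def, map_sub, map_smul, LinearMap.sub_apply, LinearMap.smul_apply,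
      smul_eq_mul, hEZ₁, hZ₁E, hEE]
    ring
  have hEN₀ : g E N₀ = 1 := by
    simp only [hN₀def, map_sub, map_smul, LinearMap.sub_apply, LinearMap.smul_apply,
      smul_eq_mul, hEZ₁, hEE]
    ring
  -- Part 2: properties of any solution N
  have part2 : ∀ N : V, (N ∈ Sorth ∧ g N N = 0 ∧ g E N = 1) →
      N ∉ W ∧ Disjoint W (Submodule.span ℝ {N}) ∧ W ⊔ Submodule.span ℝ {N} = ⊤ := by
    rintro N ⟨hNS, hNN, hEN⟩
    have hNW : N ∉ W := by
      intro hNW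
      have := hEWo N hNW
      rw [hEN] at this
      exact one_ne_zero this
    have hN0 : N ≠ 0 := by
      rintro rfl; simp at hEN
    have hdisj : Disjoint W (Submodule.span ℝ {N}) := by
      rw [Submodule.disjoint_span_singleton]
      intro h; exact absurd h hNW
    refine ⟨hNW, hdisj, ?_⟩
    apply Submodule.eq_top_of_finrank_eq
    have h1 : Module.finrank ℝ (Submodule.span ℝ {N}) = 1 := finrank_span_singleton hN0
    have h2 := Submodule.finrank_sup_add_finrank_inf_eq W (Submodule.span ℝ {N})
    rw [hdisj.eq_bot] at h2
    simp only [finrank_bot, add_zero, h1] at h2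
    omega
  refine ⟨⟨N₀, ⟨hN₀S, hN₀N₀, hEN₀⟩, ?_⟩, part2⟩
  -- uniqueness
  rintro N' ⟨hN'S, hN'N', hEN'⟩
  obtain ⟨-, -, hsup⟩ := part2 N₀ ⟨hN₀S, hN₀N₀, hEN₀⟩
  have hN' : N' ∈ W ⊔ Submodule.span ℝ {N₀} := hsup ▸ Submodule.mem_top
  obtain ⟨w, hw, z, hz, hN'eq⟩ := Submodule.mem_sup.1 hN'
  obtain ⟨t, rfl⟩ := Submodule.mem_span_singleton.1 hz
  -- compute t = 1
  have ht : t = 1 := by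
    have : g E N' = g E w + t * g E N₀ := by rw [← hN'eq]; simp
    rw [hEN', hEWo w hw, hEN₀] at this
    linarith
  subst ht
  rw [one_smul] at hN'eq
  -- D := N' - N₀ = w ∈ W, and D ∈ Worth
  have hDW : N' - N₀ ∈ W := by rw [← hN'eq]; simpa using hw
  have hDWo : N' - N₀ ∈ Worth := by
    rw [hWorth]
    intro u hu
    have hu' : u ∈ S ⊔ Submodule.span ℝ {E} := hSE ▸ hu
    obtain ⟨s, hs, e, he, rfl⟩ := Submodule.mem_sup.1 hu'
    obtain ⟨b, rfl⟩ := Submodule.mem_span_singleton.1 he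
    have h1 : g (N' - N₀) s = 0 := by
      have hA := (hSorth N').1 hN'S s hs
      have hB := (hSorth N₀).1 hN₀S s hs
      simp [hA, hB]
    have h2 : g (N' - N₀) E = 0 := by
      rw [hgsymm]
      simp [hEN', hEN₀]
    simp only [map_add, map_smul, smul_eq_mul, h1]
    rw [h2]; ring
  have hDspan : N' - N₀ ∈ Submodule.span ℝ {E} := by
    rw [hEspan]; exact ⟨hDW, hDWo⟩
  obtain ⟨a, ha⟩ := Submodule.mem_span_singleton.1 hDspan
  have hN'form : N' = N₀ + a • E := by rw [ha]; abel
  have hN₀E : g N₀ E = 1 := (hgsymm N₀ E) ▸ hEN₀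
  have h2a : (0:ℝ) = 2 * a := by
    have := hN'N'
    rw [hN'form] at this
    simp only [map_add, map_smul, LinearMap.add_apply, LinearMap.smul_apply,
      smul_eq_mul, hN₀N₀, hN₀E, hEN₀, hEE] at this
    linarith
  have : a = 0 := by linarith
  rw [hN'form, this, zero_smul, add_zero]
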